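/- ζ(3) = Σ_{m=0}^∞ ψ'(m+2)/(m+1), where ψ' is the trigamma function. -/

import Mathlib

open scoped BigOperators
open Filter Function

/-- The trigamma function `ψ'(x) = Σ_{k=0}^∞ 1/(k+x)²`. -/
noncomputable def trigamma (x : ℝ) : ℝ := ∑' k : ℕ, 1 / ((k : ℝ) + x) ^ 2

/-- Harmonic numbers. -/
noncomputable def Hn (n : ℕ) : ℝ := ∑ i ∈ Finset.range n, 1 / ((i : ℝ) + 1)

lemma hasSum_tel (c : ℝ) (hc : 0 < c) :
    HasSum (fun k : ℕ => 1 / ((k : ℝ) + c) - 1 / ((k : ℝ) + c + 1)) (1 / c) := by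
  have hnn : ∀ i : ℕ, 0 ≤ 1 / ((i : ℝ) + c) - 1 / ((i : ℝ) + c + 1) := by
    intro i
    have h1 : (0:ℝ) < (i : ℝ) + c := by positivity
    have := one_div_le_one_div_of_le h1 (by linarith : (i:ℝ) + c ≤ (i:ℝ) + c + 1)
    linarith
  rw [hasSum_iff_tendsto_nat_of_nonneg hnn]
  have hps : ∀ n : ℕ, ∑ i ∈ Finset.range n, (1 / ((i : ℝ) + c) - 1 / ((i : ℝ) + c + 1))
      = 1 / c - 1 / ((n : ℝ) + c) := by
    intro n
    have := Finset.sum_range_sub' (fun i : ℕ => 1 / ((i : ℝ) + c)) n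
    simp only [Nat.cast_zero, zero_add, Nat.cast_add, Nat.cast_one] at this
    rw [← this]
    apply Finset.sum_congr rfl
    intro i _
    ring_nf
  simp only [hps]
  have h0 : Tendsto (fun n : ℕ => 1 / ((n : ℝ) + c)) atTop (nhds 0) := by
    have h1 : Tendsto (fun n : ℕ => (n : ℝ) + c) atTop atTop :=
      tendsto_atTop_add_const_right _ c tendsto_natCast_atTop_atTop
    simpa [one_div, Pi.inv_def] using h1.inv_tendsto_atTop
  simpa using tendsto_const_nhds.sub h0

lemma hasSum_tel' (c : ℝ) (hc : 0 < c) :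
    HasSum (fun k : ℕ => 1 / (((k : ℝ) + c) * ((k : ℝ) + c + 1))) (1 / c) := by
  have h : (fun k : ℕ => 1 / ((k : ℝ) + c) - 1 / ((k : ℝ) + c + 1))
      = fun k : ℕ => 1 / (((k : ℝ) + c) * ((k : ℝ) + c + 1)) := by
    funext k
    have h1 : (0:ℝ) < (k : ℝ) + c := by positivity
    have h2 : (0:ℝ) < (k : ℝ) + c + 1 := by positivity
    field_simp
    ring
  exact h ▸ hasSum_tel c hc

lemma s2 : Summable (fun n : ℕ => 1 / ((n : ℝ) + 1) ^ 2) := by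
  have := (summable_nat_add_iff 1).mpr (Real.summable_one_div_nat_pow.mpr one_lt_two)
  exact this.congr (fun n => by push_cast; ring)

lemma s3 : Summable (fun n : ℕ => 1 / ((n : ℝ) + 1) ^ 3) := by
  have := (summable_nat_add_iff 1).mpr
    (Real.summable_one_div_nat_pow.mpr (by norm_num : (1:ℕ) < 3))
  exact this.congr (fun n => by push_cast; ring)

lemma sq_shift {c : ℝ} (hc : 1 ≤ c) : Summable (fun k : ℕ => 1 / ((k : ℝ) + c) ^ 2) := by
  refine Summable.of_nonneg_of_le (fun k => by positivity) (fun k => ?_) s2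
  apply one_div_le_one_div_of_le (by positivity)
  have h : (k:ℝ) + 1 ≤ (k:ℝ) + c := by linarith
  exact pow_le_pow_left₀ (by positivity) h 2

lemma trigamma_nonneg (x : ℝ) : 0 ≤ trigamma x :=
  tsum_nonneg fun k => by positivity

lemma trigamma_le (m : ℕ) : trigamma ((m : ℝ) + 2) ≤ 1 / ((m : ℝ) + 1) := by
  have hc : (0:ℝ) < (m : ℝ) + 1 := by positivity
  have htel := hasSum_tel' ((m : ℝ) + 1) hc
  rw [trigamma, ← htel.tsum_eq]
  refine Summable.tsum_le_tsum (fun k => ?_) (sq_shift (by linarith [Nat.cast_nonneg (α := ℝ) m] :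
      (1:ℝ) ≤ (m : ℝ) + 2)) htel.summable
  have hk : (0:ℝ) ≤ (k : ℝ) := Nat.cast_nonneg k
  have hm : (0:ℝ) ≤ (m : ℝ) := Nat.cast_nonneg m
  apply one_div_le_one_div_of_le (by positivity)
  nlinarith

noncomputable def Ff : ℕ × ℕ → ℝ := fun p => 1 / (((p.1 : ℝ) + 1) * ((p.1 : ℝ) + (p.2 : ℝ) + 2) ^ 2)

noncomputable def gg : ℕ → ℕ → ℝ :=
  fun m n => if m < n then 1 / (((m : ℝ) + 1) * ((n : ℝ) + 1) ^ 2) else 0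

lemma Ff_nonneg : 0 ≤ Ff := fun p => by unfold Ff; positivity

lemma gg_nonneg : 0 ≤ fun p : ℕ × ℕ => gg p.1 p.2 := by
  intro p
  dsimp only [gg]
  split_ifs
  · positivity
  · exact le_refl _

lemma Ff_eq (m k : ℕ) :
    Ff (m, k) = (1 / ((m : ℝ) + 1)) * (1 / ((k : ℝ) + ((m : ℝ) + 2)) ^ 2) := by
  simp only [Ff]
  rw [one_div_mul_one_div]
  congr 1
  ring

lemma sFrow (m : ℕ) : Summable (fun k => Ff (m, k)) := by
  have hm : (0:ℝ) ≤ (m : ℝ) := Nat.cast_nonneg m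
  have := (sq_shift (by linarith : (1:ℝ) ≤ (m : ℝ) + 2)).mul_left (1 / ((m : ℝ) + 1))
  exact this.congr (fun k => (Ff_eq m k).symm)

lemma row_F (m : ℕ) : (∑' k, Ff (m, k)) = trigamma ((m : ℝ) + 2) / ((m : ℝ) + 1) := by
  rw [tsum_congr (Ff_eq m), tsum_mul_left]
  rw [one_div_mul_eq_div]
  rfl

lemma sF : Summable Ff := by
  rw [summable_prod_of_nonneg Ff_nonneg]
  refine ⟨fun m => sFrow m, ?_⟩
  refine Summable.of_nonneg_of_le (fun m => tsum_nonneg (fun k => Ff_nonneg (m, k)))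
    (fun m => ?_) s2
  rw [row_F m]
  have hc : (0:ℝ) < (m : ℝ) + 1 := by positivity
  rw [show (1:ℝ) / ((m : ℝ) + 1) ^ 2 = (1 / ((m : ℝ) + 1)) / ((m : ℝ) + 1) by
    rw [pow_two, ← div_div]]
  exact (div_le_div_iff_of_pos_right hc).mpr (trigamma_le m)

lemma sTrig : Summable (fun m : ℕ => trigamma ((m : ℝ) + 2) / ((m : ℝ) + 1)) :=
  (((summable_prod_of_nonneg Ff_nonneg).mp sF).2).congr (fun m => row_F m)

lemma row_g (m : ℕ) : (∑' n, gg m n) = ∑' k, Ff (m, k) := by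
  have hinj : Function.Injective (fun k : ℕ => m + 1 + k) := add_right_injective (m + 1)
  have h0 : ∀ n, n ∉ Set.range (fun k : ℕ => m + 1 + k) → gg m n = 0 := by
    intro n hn
    have hmn : ¬ m < n := by
      intro h
      exact hn ⟨n - (m + 1), show m + 1 + (n - (m + 1)) = n by omega⟩
    simp [gg, hmn]
  rw [← hinj.tsum_eq (Function.support_subset_iff'.mpr h0)]
  apply tsum_congr
  intro k
  have h1 : m < m + 1 + k := by omega
  simp only [gg, if_pos h1, Ff]
  push_cast
  ring_nf

lemma sg : Summable (Function.uncurry gg) := by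
  have : Function.uncurry gg = fun p : ℕ × ℕ => gg p.1 p.2 := rfl
  rw [this]
  rw [summable_prod_of_nonneg gg_nonneg]
  constructor
  · intro m
    refine Summable.of_nonneg_of_le (fun n => gg_nonneg (m, n)) (fun n => ?_) s2
    dsimp only [gg]
    split_ifs with h
    · apply one_div_le_one_div_of_le (by positivity)
      have h1 : (1:ℝ) ≤ (m : ℝ) + 1 := by
        have := Nat.cast_nonneg (α := ℝ) m; linarith
      nlinarith [sq_nonneg ((n:ℝ) + 1), pow_pos (by positivity : (0:ℝ) < (n:ℝ)+1) 2]
    · positivity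
  · exact (((summable_prod_of_nonneg Ff_nonneg).mp sF).2).congr (fun m => (row_g m).symm)

lemma col_g (n : ℕ) : (∑' m, gg m n) = Hn n / ((n : ℝ) + 1) ^ 2 := by
  rw [tsum_eq_sum (s := Finset.range n) (f := fun m => gg m n)
    (fun m hm => by simp only [gg, if_neg (fun h => hm (Finset.mem_range.mpr h))])]
  rw [Finset.sum_congr rfl (fun m hm => ?_), ← Finset.sum_mul (f := fun m : ℕ => 1 / ((m:ℝ)+1))]
  · rw [← Hn, mul_one_div]
  · show gg m n = (1 / ((m:ℝ) + 1)) * (1 / ((n:ℝ) + 1) ^ 2)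
    rw [gg, if_pos (Finset.mem_range.mp hm), one_div_mul_one_div]

noncomputable def Gg : ℕ × ℕ → ℝ := fun p => 1 / (((p.2 : ℝ) + 1) * ((p.1 : ℝ) + (p.2 : ℝ) + 2) ^ 2)

lemma Gg_nonneg : 0 ≤ Gg := fun p => by unfold Gg; positivity

lemma sG : Summable Gg :=
  sF.prod_symm.congr (fun p => by simp only [Ff, Gg, Prod.fst_swap, Prod.snd_swap]; ring_nf)

lemma tsum_F_eq_tsum_G : (∑' p : ℕ × ℕ, Ff p) = ∑' p : ℕ × ℕ, Gg p := by
  rw [← (Equiv.prodComm ℕ ℕ).tsum_eq Ff]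
  apply tsum_congr
  intro p
  simp only [Ff, Gg, Equiv.prodComm_apply, Prod.fst_swap, Prod.snd_swap]
  ring_nf

noncomputable def dd : ℕ → ℕ → ℝ :=
  fun i k => 1 / ((k : ℝ) + (i : ℝ) + 1) - 1 / ((k : ℝ) + (i : ℝ) + 2)

lemma hasSum_dd (i : ℕ) : HasSum (dd i) (1 / ((i : ℝ) + 1)) := by
  have h : dd i = fun k : ℕ => 1 / ((k : ℝ) + ((i : ℝ) + 1)) - 1 / ((k : ℝ) + ((i : ℝ) + 1) + 1) := by
    funext k
    simp only [dd]
    ring_nf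
  rw [h]
  exact hasSum_tel ((i : ℝ) + 1) (by positivity)

lemma row_G (m : ℕ) :
    (∑' k, Gg (m, k)) = Hn (m + 1) / ((m : ℝ) + 1) ^ 2 - trigamma ((m : ℝ) + 2) / ((m : ℝ) + 1) := by
  have hA : ∀ k : ℕ, (∑ i ∈ Finset.range (m + 1), dd i k)
      = 1 / ((k : ℝ) + 1) - 1 / ((k : ℝ) + (m : ℝ) + 2) := by
    intro k
    have h := Finset.sum_range_sub' (fun i : ℕ => 1 / ((k : ℝ) + (i : ℝ) + 1)) (m + 1)
    simp only [Nat.cast_zero, add_zero, Nat.cast_add, Nat.cast_one] at h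
    rw [show (1:ℝ) / ((k:ℝ) + 1) - 1 / ((k:ℝ) + (m:ℝ) + 2)
        = 1 / ((k:ℝ) + 1) - 1 / ((k:ℝ) + ((m:ℝ) + 1) + 1) by ring_nf, ← h]
    apply Finset.sum_congr rfl
    intro i _
    simp only [dd]
    ring_nf
  have hpoint : ∀ k : ℕ, Gg (m, k)
      = (1 / ((m : ℝ) + 1) ^ 2) * (∑ i ∈ Finset.range (m + 1), dd i k)
        - (1 / ((m : ℝ) + 1)) * (1 / ((k : ℝ) + ((m : ℝ) + 2)) ^ 2) := by
    intro k
    rw [hA k]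
    simp only [Gg]
    have hk1 : ((k:ℝ) + 1) ≠ 0 := by positivity
    have hm1 : ((m:ℝ) + 1) ≠ 0 := by positivity
    have hkm : ((k:ℝ) + (m:ℝ) + 2) ≠ 0 := by positivity
    have hkm' : ((k:ℝ) + ((m:ℝ) + 2)) ≠ 0 := by positivity
    field_simp
    ring
  have sA : Summable (fun k => ∑ i ∈ Finset.range (m + 1), dd i k) :=
    summable_sum (fun i _ => (hasSum_dd i).summable)
  have hm : (0:ℝ) ≤ (m : ℝ) := Nat.cast_nonneg m
  have sB : Summable (fun k : ℕ => 1 / ((k : ℝ) + ((m : ℝ) + 2)) ^ 2) :=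
    sq_shift (by linarith)
  calc (∑' k, Gg (m, k))
      = ∑' k, ((1 / ((m : ℝ) + 1) ^ 2) * (∑ i ∈ Finset.range (m + 1), dd i k)
        - (1 / ((m : ℝ) + 1)) * (1 / ((k : ℝ) + ((m : ℝ) + 2)) ^ 2)) := tsum_congr hpoint
    _ = (1 / ((m : ℝ) + 1) ^ 2) * (∑' k, ∑ i ∈ Finset.range (m + 1), dd i k)
        - (1 / ((m : ℝ) + 1)) * trigamma ((m : ℝ) + 2) := by
        rw [Summable.tsum_sub (sA.mul_left _) (sB.mul_left _), tsum_mul_left, tsum_mul_left]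
        rfl
    _ = (1 / ((m : ℝ) + 1) ^ 2) * Hn (m + 1) - (1 / ((m : ℝ) + 1)) * trigamma ((m : ℝ) + 2) := by
        rw [Summable.tsum_finsetSum (fun i _ => (hasSum_dd i).summable)]
        congr 1
        rw [Hn]
        exact congrArg _ (Finset.sum_congr rfl (fun i _ => (hasSum_dd i).tsum_eq))
    _ = Hn (m + 1) / ((m : ℝ) + 1) ^ 2 - trigamma ((m : ℝ) + 2) / ((m : ℝ) + 1) := by
        rw [one_div_mul_eq_div, one_div_mul_eq_div]

set_option maxHeartbeats 1000000 in
/-- `ζ(3) = Σ_{m=0}^∞ ψ'(m+2)/(m+1)`. -/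
theorem zeta_three_eq_trigamma_sum :
    (∑' n : ℕ, 1 / ((n : ℝ) + 1) ^ 3) = ∑' m : ℕ, trigamma ((m : ℝ) + 2) / ((m : ℝ) + 1) := by
  -- T = RHS
  have hTF : (∑' p : ℕ × ℕ, Ff p) = ∑' m : ℕ, trigamma ((m : ℝ) + 2) / ((m : ℝ) + 1) := by
    rw [Summable.tsum_prod sF]
    exact tsum_congr row_F
  -- summability of column sums of g
  have sHrow : Summable (fun n : ℕ => Hn n / ((n : ℝ) + 1) ^ 2) := by
    have h := ((summable_prod_of_nonneg (fun p : ℕ × ℕ => gg_nonneg p.swap)).mp sg.prod_symm).2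
    exact h.congr (fun n => col_g n)
  -- T = ∑ H_n/(n+1)²
  have hTg : (∑' p : ℕ × ℕ, Ff p) = ∑' n : ℕ, Hn n / ((n : ℝ) + 1) ^ 2 := by
    rw [Summable.tsum_prod sF, tsum_congr (fun m => (row_g m).symm), ← Summable.tsum_comm sg]
    exact tsum_congr col_g
  -- row sums of G summable
  have sGrow : Summable (fun m : ℕ => ∑' k, Gg (m, k)) :=
    ((summable_prod_of_nonneg Gg_nonneg).mp sG).2
  have sH1 : Summable (fun m : ℕ => Hn (m + 1) / ((m : ℝ) + 1) ^ 2) := by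
    refine (sGrow.add sTrig).congr (fun m => ?_)
    rw [row_G m]
    ring
  -- T = ∑ H_{m+1}/(m+1)² − RHS
  have hTG2 : (∑' p : ℕ × ℕ, Ff p)
      = (∑' m : ℕ, Hn (m + 1) / ((m : ℝ) + 1) ^ 2)
        - ∑' m : ℕ, trigamma ((m : ℝ) + 2) / ((m : ℝ) + 1) := by
    rw [tsum_F_eq_tsum_G, Summable.tsum_prod sG, tsum_congr row_G, Summable.tsum_sub sH1 sTrig]
  -- shift identity
  have hshift : (∑' m : ℕ, Hn (m + 1) / ((m : ℝ) + 1) ^ 2)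
      = (∑' n : ℕ, Hn n / ((n : ℝ) + 1) ^ 2) + ∑' n : ℕ, 1 / ((n : ℝ) + 1) ^ 3 := by
    rw [← Summable.tsum_add sHrow s3]
    apply tsum_congr
    intro m
    have hHs : Hn (m + 1) = Hn m + 1 / ((m : ℝ) + 1) := Finset.sum_range_succ _ m
    rw [hHs]
    have hm1 : ((m:ℝ) + 1) ≠ 0 := by positivity
    field_simp
  linarith [hTF, hTg, hTG2, hshift]
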